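/- The function ψ(u) = (1−u²)·arctanh(u)/u is strictly decreasing on (0,1), with lim_{u→0⁺} ψ(u) = 1 and lim_{u→1⁻} ψ(u) = 0. -/

import Mathlib

open Filter

noncomputable section

/-- Inverse hyperbolic tangent. -/
def arctanh (x : ℝ) : ℝ := (1 / 2) * Real.log ((1 + x) / (1 - x))

/-- `ψ(u) = (1−u²)·arctanh(u)/u`. -/
def psi (u : ℝ) : ℝ := (1 - u ^ 2) * arctanh u / u

lemma arctanh_zero : arctanh 0 = 0 := by simp [arctanh]

lemma hasDerivAt_arctanh {x : ℝ} (h1 : -1 < x) (h2 : x < 1) :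
    HasDerivAt arctanh (1 / (1 - x ^ 2)) x := by
  have hx1 : (0:ℝ) < 1 + x := by linarith
  have hx2 : (0:ℝ) < 1 - x := by linarith
  have hnum : HasDerivAt (fun y : ℝ => 1 + y) 1 x := by
    simpa using (hasDerivAt_id x).const_add 1
  have hden : HasDerivAt (fun y : ℝ => 1 - y) (-1) x := by
    simpa using (hasDerivAt_id x).const_sub 1
  have hq : HasDerivAt (fun y : ℝ => (1 + y) / (1 - y))
      ((1 * (1 - x) - (1 + x) * (-1)) / (1 - x) ^ 2) x :=
    hnum.div hden hx2.ne'
  have hpos : (1 + x) / (1 - x) ≠ 0 := by positivity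
  have hlog := hq.log hpos
  have := hlog.const_mul (1/2 : ℝ)
  have h3 : (1 - x ^ 2) ≠ 0 := by nlinarith
  refine this.congr_deriv ?_
  field_simp
  ring

lemma self_lt_arctanh {x : ℝ} (h0 : 0 < x) (h1 : x < 1) : x < arctanh x := by
  have hmono : StrictMonoOn (fun y => arctanh y - y) (Set.Ico (0:ℝ) 1) := by
    apply strictMonoOn_of_deriv_pos (convex_Ico 0 1)
    · intro y hy
      have := (hasDerivAt_arctanh (by linarith [hy.1] : (-1:ℝ) < y) hy.2).sub
        (hasDerivAt_id y)
      exact this.continuousAt.continuousWithinAt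
    · intro y hy
      rw [interior_Ico] at hy
      have h1y : (0:ℝ) < 1 - y ^ 2 := by nlinarith [hy.1, hy.2]
      have hd : HasDerivAt (fun y => arctanh y - y) (1 / (1 - y ^ 2) - 1) y := by
        exact (hasDerivAt_arctanh (by linarith [hy.1] : (-1:ℝ) < y) hy.2).sub
          (hasDerivAt_id' y)
      rw [hd.deriv, sub_pos, lt_div_iff₀ h1y]
      nlinarith [hy.1]
  have := hmono (Set.mem_Ico.2 ⟨le_refl 0, one_pos⟩)
    (Set.mem_Ico.2 ⟨h0.le, h1⟩) h0
  simpa [arctanh_zero] using this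

lemma hasDerivAt_psi {x : ℝ} (h0 : 0 < x) (h1 : x < 1) :
    HasDerivAt psi (((-(2*x) * arctanh x + (1 - x ^ 2) * (1 / (1 - x ^ 2))) * x
      - (1 - x ^ 2) * arctanh x * 1) / x ^ 2) x := by
  have hA := hasDerivAt_arctanh (by linarith : (-1:ℝ) < x) h1
  have hf : HasDerivAt (fun u : ℝ => 1 - u ^ 2) (-(2*x)) x := by
    simpa using ((hasDerivAt_pow 2 x).const_sub 1)
  exact ((hf.mul hA).div (hasDerivAt_id x) h0.ne')

/-- `ψ` is strictly decreasing on `(0,1)`, with `ψ(u) → 1` as `u → 0⁺` and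
`ψ(u) → 0` as `u → 1⁻`. -/
theorem psi_strictAnti_and_limits :
    StrictAntiOn psi (Set.Ioo (0 : ℝ) 1) ∧
      Tendsto psi (nhdsWithin 0 (Set.Ioi 0)) (nhds 1) ∧
      Tendsto psi (nhdsWithin 1 (Set.Iio 1)) (nhds 0) := by
  refine ⟨?_, ?_, ?_⟩
  · apply strictAntiOn_of_deriv_neg (convex_Ioo 0 1)
    · intro y hy
      exact (hasDerivAt_psi hy.1 hy.2).continuousAt.continuousWithinAt
    · intro y hy
      rw [interior_Ioo] at hy
      obtain ⟨hy0, hy1⟩ := hy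
      rw [(hasDerivAt_psi hy0 hy1).deriv]
      have h1y : (0:ℝ) < 1 - y ^ 2 := by nlinarith
      have hA := self_lt_arctanh hy0 hy1
      rw [div_neg_iff]
      right
      have hApos : 0 < arctanh y := lt_trans hy0 hA
      constructor
      · have h2 : (1 - y ^ 2) * (1 / (1 - y ^ 2)) = 1 := by field_simp
        rw [h2]
        nlinarith [mul_pos (mul_pos hy0 hy0) hApos]
      · positivity
  · -- limit at 0⁺
    have hA := hasDerivAt_arctanh (by norm_num : (-1:ℝ) < 0) one_pos
    rw [hasDerivAt_iff_tendsto_slope] at hA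
    have hslope : Tendsto (slope arctanh 0) (nhdsWithin 0 (Set.Ioi 0)) (nhds 1) := by
      have h := hA.mono_left (nhdsWithin_mono _ (fun y (hy : y ∈ Set.Ioi (0:ℝ)) => ne_of_gt hy))
      simpa using h
    have hsq : Tendsto (fun u : ℝ => 1 - u ^ 2) (nhdsWithin 0 (Set.Ioi 0)) (nhds 1) := by
      have : Tendsto (fun u : ℝ => 1 - u ^ 2) (nhds 0) (nhds (1 - 0 ^ 2)) :=
        Continuous.tendsto (by continuity) 0
      simpa using this.mono_left nhdsWithin_le_nhds
    have hmul := hsq.mul hslope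
    rw [one_mul] at hmul
    apply hmul.congr'
    filter_upwards [self_mem_nhdsWithin] with u hu
    have hu0 : u ≠ 0 := ne_of_gt hu
    simp [slope, arctanh_zero, psi, div_eq_inv_mul]
    ring
  · -- limit at 1⁻
    have key : Tendsto (fun u : ℝ => ((1 + u) / (2 * u)) *
        ((1 - u) * Real.log (1 + u) - (1 - u) * Real.log (1 - u)))
        (nhdsWithin 1 (Set.Iio 1)) (nhds 0) := by
      have h1 : Tendsto (fun u : ℝ => (1 + u) / (2 * u)) (nhds 1) (nhds 1) := by
        have : Tendsto (fun u : ℝ => (1 + u) / (2 * u)) (nhds 1)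
            (nhds ((1 + 1) / (2 * 1))) := by
          exact Tendsto.div (Continuous.tendsto (by continuity) 1)
            (Continuous.tendsto (by continuity) 1) (by norm_num)
        simpa using this
      have h2 : Tendsto (fun u : ℝ => (1 - u) * Real.log (1 + u)) (nhds 1) (nhds 0) := by
        have : Tendsto (fun u : ℝ => (1 - u) * Real.log (1 + u)) (nhds 1)
            (nhds ((1 - 1) * Real.log (1 + 1))) := by
          exact Tendsto.mul (Continuous.tendsto (by continuity) 1)
            ((Real.continuousAt_log (by norm_num)).comp
              (Continuous.continuousAt (by continuity)))
        simpa using this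
      have h3 : Tendsto (fun u : ℝ => (1 - u) * Real.log (1 - u)) (nhds 1) (nhds 0) := by
        have hc : Tendsto (fun t : ℝ => t * Real.log t) (nhds 0) (nhds 0) := by
          have := Real.continuous_mul_log.tendsto 0
          simpa using this
        have hsub : Tendsto (fun u : ℝ => 1 - u) (nhds 1) (nhds 0) := by
          have : Tendsto (fun u : ℝ => 1 - u) (nhds 1) (nhds (1 - 1)) :=
            Continuous.tendsto (by continuity) 1
          simpa using this
        exact hc.comp hsub
      have := h1.mul (h2.sub h3)
      rw [one_mul, sub_zero] at this
      exact this.mono_left nhdsWithin_le_nhds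
    apply key.congr'
    have hmem : Set.Ioo (0:ℝ) 1 ∈ nhdsWithin 1 (Set.Iio 1) := by
      apply mem_nhdsWithin.2
      exact ⟨Set.Ioi 0, isOpen_Ioi, by norm_num, fun y hy => ⟨hy.1, hy.2⟩⟩
    filter_upwards [hmem] with u hu
    obtain ⟨hu0, hu1⟩ := hu
    have h1u : (0:ℝ) < 1 - u := by linarith
    have h1u' : (0:ℝ) < 1 + u := by linarith
    rw [psi, arctanh, Real.log_div h1u'.ne' h1u.ne']
    field_simp
    ring

end
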